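/- arXiv:2002.03400 — 2 statements merged into one kernel-verified Lean document; each statement's English description precedes it below -/
import Mathlib

section
/- (Theorem 5.1, column-wise butterfly error bound.) Fix natural numbers L ≥ 1, lm ≤ L, m₀ ≥ 1, n₀ ≥ 1, a real ε ≥ 0, and a real matrix A of size (2^L·m₀) × (2^L·n₀). For lm ≤ l ≤ L, τ ∈ {0,…,2^l−1}, ν ∈ {0,…,2^{L−l}−1}, let K(l,τ,ν) be the (2^{L−l}·m₀) × (2^l·n₀) block of A with entries K(l,τ,ν)(i,j) = A(τ·2^{L−l}·m₀ + i, ν·2^l·n₀ + j). Suppose given ranks r(l,τ,ν) ∈ ℕ and matrices as follows: (a) for each τ ∈ {0,…,2^L−1}, a matrix U(L,τ,0) of size m₀ × r(L,τ,0) with orthonormal columns such that ‖K(L,τ,0) − U(L,τ,0)·U(L,τ,0)ᵀ·K(L,τ,0)‖_F ≤ ε·‖K(L,τ,0)‖_F; (b) for each l with lm ≤ l < L and each τ ∈ {0,…,2^l−1}, ν ∈ {0,…,2^{L−l}−1}: letting D(l,τ,ν) = diag(U(l+1, 2τ, ⌊ν/2⌋), U(l+1, 2τ+1, ⌊ν/2⌋)),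 a transfer matrix R(l,τ,ν) of size (r(l+1,2τ,⌊ν/2⌋) + r(l+1,2τ+1,⌊ν/2⌋)) × r(l,τ,ν) with orthonormal columns such that ‖D(l,τ,ν)ᵀ·K(l,τ,ν) − R(l,τ,ν)·R(l,τ,ν)ᵀ·D(l,τ,ν)ᵀ·K(l,τ,ν)‖_F ≤ ε·‖D(l,τ,ν)ᵀ·K(l,τ,ν)‖_F, with U(l,τ,ν) defined as D(l,τ,ν)·R(l,τ,ν). Then for every l with lm ≤ l ≤ L: Σ_{τ<2^l} Σ_{ν<2^{L−l}} ‖K(l,τ,ν) − U(l,τ,ν)·U(l,τ,ν)ᵀ·K(l,τ,ν)‖_F² ≤ (L−l+1)·ε²·‖A‖_F². -/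
open Matrix

/-- Frobenius norm of a real matrix. -/
noncomputable def frobNorm {α β : Type*} [Fintype α] [Fintype β] (A : Matrix α β ℝ) : ℝ :=
  Real.sqrt (∑ i, ∑ j, A i j ^ 2)

/-- Global row index of entry `i` of the `τ`-th row group at level `l`. -/
def rowIdx (L m₀ l τ : ℕ) (hl : l ≤ L) (hτ : τ < 2 ^ l)
    (i : Fin (2 ^ (L - l) * m₀)) : Fin (2 ^ L * m₀) :=
  ⟨τ * (2 ^ (L - l) * m₀) + i.1, by
    have h1 : τ * (2 ^ (L - l) * m₀) + i.1 < (τ + 1) * (2 ^ (L - l) * m₀) := by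
      rw [Nat.succ_mul]
      exact Nat.add_lt_add_left i.2 _
    have h2 : (τ + 1) * (2 ^ (L - l) * m₀) ≤ 2 ^ l * (2 ^ (L - l) * m₀) :=
      Nat.mul_le_mul_right _ hτ
    have h3 : 2 ^ l * (2 ^ (L - l) * m₀) = 2 ^ L * m₀ := by
      rw [← mul_assoc, ← pow_add]
      congr 2
      omega
    exact h1.trans_le (h2.trans_eq h3)⟩

/-- Global column index of entry `j` of the `ν`-th column group at level `l`. -/
def colIdx (L n₀ l ν : ℕ) (hl : l ≤ L) (hν : ν < 2 ^ (L - l))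
    (j : Fin (2 ^ l * n₀)) : Fin (2 ^ L * n₀) :=
  ⟨ν * (2 ^ l * n₀) + j.1, by
    have h1 : ν * (2 ^ l * n₀) + j.1 < (ν + 1) * (2 ^ l * n₀) := by
      rw [Nat.succ_mul]
      exact Nat.add_lt_add_left j.2 _
    have h2 : (ν + 1) * (2 ^ l * n₀) ≤ 2 ^ (L - l) * (2 ^ l * n₀) :=
      Nat.mul_le_mul_right _ hν
    have h3 : 2 ^ (L - l) * (2 ^ l * n₀) = 2 ^ L * n₀ := by
      rw [← mul_assoc, ← pow_add]
      congr 2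
      omega
    exact h1.trans_le (h2.trans_eq h3)⟩

/-- The `(τ,ν)` block of `A` at level `l`. -/
def blockOf {L m₀ n₀ : ℕ} (A : Matrix (Fin (2 ^ L * m₀)) (Fin (2 ^ L * n₀)) ℝ)
    (l τ ν : ℕ) (hl : l ≤ L) (hτ : τ < 2 ^ l) (hν : ν < 2 ^ (L - l)) :
    Matrix (Fin (2 ^ (L - l) * m₀)) (Fin (2 ^ l * n₀)) ℝ :=
  Matrix.of fun i j => A (rowIdx L m₀ l τ hl hτ i) (colIdx L n₀ l ν hl hν j)

/-- Splitting the rows of a level-`l` block (row-node `τ`) into the rows of its two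
level-`(l+1)` children `2τ` and `2τ+1`. -/
def rowSplit (L m₀ l : ℕ) (hl : l < L) :
    Fin (2 ^ (L - l) * m₀) ≃ Fin (2 ^ (L - (l + 1)) * m₀) ⊕ Fin (2 ^ (L - (l + 1)) * m₀) :=
  (finCongr (by
    have h2 : 2 ^ (L - l) = 2 ^ (L - (l + 1)) * 2 := by
      rw [← pow_succ]
      congr 1
      omega
    rw [h2]
    ring)).trans finSumFinEquiv.symm

noncomputable def frobSq {α β : Type*} [Fintype α] [Fintype β] (A : Matrix α β ℝ) : ℝ :=
  ∑ i, ∑ j, A i j ^ 2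

lemma frobSq_nonneg {α β : Type*} [Fintype α] [Fintype β] (A : Matrix α β ℝ) : 0 ≤ frobSq A :=
  Finset.sum_nonneg fun _ _ => Finset.sum_nonneg fun _ _ => sq_nonneg _

lemma frobNorm_sq {α β : Type*} [Fintype α] [Fintype β] (A : Matrix α β ℝ) :
    frobNorm A ^ 2 = frobSq A := Real.sq_sqrt (frobSq_nonneg A)

lemma frobNorm_nonneg {α β : Type*} [Fintype α] [Fintype β] (A : Matrix α β ℝ) :
    0 ≤ frobNorm A := Real.sqrt_nonneg _

lemma frobSq_eq_trace {α β : Type*} [Fintype α] [Fintype β] (A : Matrix α β ℝ) :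
    frobSq A = Matrix.trace (Aᵀ * A) := by
  unfold frobSq Matrix.trace
  rw [Finset.sum_comm]
  simp [Matrix.mul_apply, Matrix.diag, sq]

lemma trace_transpose_mul_comm {α β : Type*} [Fintype α] [Fintype β]
    (X Y : Matrix α β ℝ) : Matrix.trace (Xᵀ * Y) = Matrix.trace (Yᵀ * X) := by
  rw [← Matrix.trace_transpose (Xᵀ * Y), Matrix.transpose_mul, Matrix.transpose_transpose]

lemma frobSq_add {α β : Type*} [Fintype α] [Fintype β] (X Y : Matrix α β ℝ) :
    frobSq (X + Y) = frobSq X + 2 * Matrix.trace (Xᵀ * Y) + frobSq Y := by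
  rw [frobSq_eq_trace, frobSq_eq_trace, frobSq_eq_trace, Matrix.transpose_add,
    Matrix.add_mul, Matrix.mul_add, Matrix.mul_add, Matrix.trace_add, Matrix.trace_add,
    Matrix.trace_add, trace_transpose_mul_comm Y X]
  ring

lemma frobSq_proj_decomp {m n p : Type*} [Fintype m] [Fintype n] [Fintype p] [DecidableEq p]
    (U : Matrix m p ℝ) (hU : Uᵀ * U = 1) (K : Matrix m n ℝ) (Y : Matrix p n ℝ) :
    frobSq (K - U * Y) = frobSq (K - U * (Uᵀ * K)) + frobSq (Uᵀ * K - Y) := by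
  have hUB : Uᵀ * (K - U * (Uᵀ * K)) = 0 := by
    rw [Matrix.mul_sub, ← Matrix.mul_assoc, hU, Matrix.one_mul, sub_self]
  have hBU : (K - U * (Uᵀ * K))ᵀ * U = 0 := by
    have := congrArg Matrix.transpose hUB
    rwa [Matrix.transpose_mul, Matrix.transpose_transpose, Matrix.transpose_zero] at this
  have hdec : K - U * Y = (K - U * (Uᵀ * K)) + U * (Uᵀ * K - Y) := by
    rw [Matrix.mul_sub]; abel
  rw [hdec, frobSq_add]
  have h1 : Matrix.trace ((K - U * (Uᵀ * K))ᵀ * (U * (Uᵀ * K - Y))) = 0 := by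
    rw [← Matrix.mul_assoc, hBU, Matrix.zero_mul, Matrix.trace_zero]
  have h2 : frobSq (U * (Uᵀ * K - Y)) = frobSq (Uᵀ * K - Y) := by
    rw [frobSq_eq_trace, frobSq_eq_trace, Matrix.transpose_mul, Matrix.mul_assoc,
      ← Matrix.mul_assoc Uᵀ U, hU, Matrix.one_mul]
  rw [h1, h2]; ring

lemma frobSq_resid_le {m n p : Type*} [Fintype m] [Fintype n] [Fintype p] [DecidableEq p]
    (U : Matrix m p ℝ) (hU : Uᵀ * U = 1) (K : Matrix m n ℝ) :
    frobSq (K - U * (Uᵀ * K)) ≤ frobSq K := by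
  have h := frobSq_proj_decomp U hU K 0
  rw [Matrix.mul_zero, sub_zero, sub_zero] at h
  nlinarith [frobSq_nonneg (Uᵀ * K)]

lemma frobSq_transpose_mul_le {m n p : Type*} [Fintype m] [Fintype n] [Fintype p] [DecidableEq p]
    (U : Matrix m p ℝ) (hU : Uᵀ * U = 1) (K : Matrix m n ℝ) :
    frobSq (Uᵀ * K) ≤ frobSq K := by
  have h := frobSq_proj_decomp U hU K 0
  rw [Matrix.mul_zero, sub_zero, sub_zero] at h
  nlinarith [frobSq_nonneg (K - U * (Uᵀ * K))]

lemma submatrix_row_mul {l m n p : Type*} [Fintype n]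
    (M : Matrix m n ℝ) (N : Matrix n p ℝ) (e : l → m) :
    M.submatrix e id * N = (M * N).submatrix e id := by
  ext i j; simp [Matrix.mul_apply]

lemma mul_submatrix_col {m n p q : Type*} [Fintype n]
    (M : Matrix m n ℝ) (N : Matrix n p ℝ) (f : q → p) :
    M * N.submatrix id f = (M * N).submatrix id f := by
  ext i j; simp [Matrix.mul_apply]

lemma frobSq_submatrix {m n m' : Type*} [Fintype m] [Fintype n] [Fintype m']
    (M : Matrix m n ℝ) (e : m' ≃ m) :
    frobSq (M.submatrix ⇑e id) = frobSq M := by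
  unfold frobSq
  exact Fintype.sum_equiv e _ _ fun i => rfl

lemma frobSq_fromRows {m₁ m₂ n : Type*} [Fintype m₁] [Fintype m₂] [Fintype n]
    (X : Matrix m₁ n ℝ) (Y : Matrix m₂ n ℝ) :
    frobSq (Matrix.fromRows X Y) = frobSq X + frobSq Y := by
  unfold frobSq
  rw [Fintype.sum_sum_type]
  simp [Matrix.fromRows_apply_inl, Matrix.fromRows_apply_inr]

lemma fromRows_sub {m₁ m₂ n : Type*} (X X' : Matrix m₁ n ℝ) (Y Y' : Matrix m₂ n ℝ) :
    Matrix.fromRows X Y - Matrix.fromRows X' Y' = Matrix.fromRows (X - X') (Y - Y') := by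
  ext (i | i) j <;> simp [Matrix.fromRows_apply_inl, Matrix.fromRows_apply_inr]

lemma sum_range_add' (f : ℕ → ℝ) (m n : ℕ) :
    ∑ x ∈ Finset.range (m + n), f x
      = ∑ x ∈ Finset.range m, f x + ∑ x ∈ Finset.range n, f (m + x) := by
  induction n with
  | zero => simp
  | succ n ih =>
      rw [← Nat.add_assoc, Finset.sum_range_succ, Finset.sum_range_succ, ih]; ring

lemma sum_range_mul' (f : ℕ → ℝ) (n m : ℕ) :
    ∑ x ∈ Finset.range (n * m), f x
      = ∑ τ ∈ Finset.range n, ∑ i ∈ Finset.range m, f (τ * m + i) := by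
  induction n with
  | zero => simp
  | succ n ih =>
      rw [Nat.succ_mul, sum_range_add', ih, Finset.sum_range_succ]

lemma sum_range_two_mul' (f : ℕ → ℝ) (n : ℕ) :
    ∑ x ∈ Finset.range (2 * n), f x
      = ∑ μ ∈ Finset.range n, (f (2 * μ) + f (2 * μ + 1)) := by
  rw [mul_comm, sum_range_mul']
  refine Finset.sum_congr rfl fun μ _ => ?_
  rw [Finset.sum_range_succ, Finset.sum_range_one]
  ring_nf

lemma rowSplit_symm_inl (L m₀ l : ℕ) (hl : l < L) (i : Fin (2 ^ (L - (l + 1)) * m₀)) :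
    ((rowSplit L m₀ l hl).symm (Sum.inl i)).1 = i.1 := by
  simp [rowSplit]

lemma rowSplit_symm_inr (L m₀ l : ℕ) (hl : l < L) (i : Fin (2 ^ (L - (l + 1)) * m₀)) :
    ((rowSplit L m₀ l hl).symm (Sum.inr i)).1 = 2 ^ (L - (l + 1)) * m₀ + i.1 := by
  simp [rowSplit]; ring

lemma submatrix_transpose_mul_submatrix {m n p m' : Type*} [Fintype m] [Fintype m']
    (M : Matrix m n ℝ) (N : Matrix m p ℝ) (e : m' ≃ m) :
    (M.submatrix ⇑e id)ᵀ * (N.submatrix ⇑e id) = Mᵀ * N := by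
  rw [Matrix.transpose_submatrix, Matrix.submatrix_mul_equiv Mᵀ N id e id,
    Matrix.submatrix_id_id]

lemma fromBlocks_orth {m₁ m₂ p₁ p₂ : Type*} [Fintype m₁] [Fintype m₂] [Fintype p₁] [Fintype p₂]
    [DecidableEq p₁] [DecidableEq p₂]
    (U₁ : Matrix m₁ p₁ ℝ) (U₂ : Matrix m₂ p₂ ℝ)
    (h1 : U₁ᵀ * U₁ = 1) (h2 : U₂ᵀ * U₂ = 1) :
    (Matrix.fromBlocks U₁ 0 0 U₂)ᵀ * Matrix.fromBlocks U₁ 0 0 U₂ = 1 := by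
  rw [Matrix.fromBlocks_transpose, Matrix.fromBlocks_multiply]
  simp [h1, h2, Matrix.fromBlocks_one]

section Aux

variable {L m₀ n₀ : ℕ} {r : ℕ → ℕ → ℕ → ℕ}

noncomputable def aEntry (A : Matrix (Fin (2 ^ L * m₀)) (Fin (2 ^ L * n₀)) ℝ) (x y : ℕ) : ℝ :=
  if h : x < 2 ^ L * m₀ ∧ y < 2 ^ L * n₀ then A ⟨x, h.1⟩ ⟨y, h.2⟩ ^ 2 else 0

noncomputable def blockSq (A : Matrix (Fin (2 ^ L * m₀)) (Fin (2 ^ L * n₀)) ℝ) (l τ ν : ℕ) : ℝ :=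
  if h : l ≤ L ∧ τ < 2 ^ l ∧ ν < 2 ^ (L - l) then
    frobSq (blockOf A l τ ν h.1 h.2.1 h.2.2)
  else 0

noncomputable def residSq (A : Matrix (Fin (2 ^ L * m₀)) (Fin (2 ^ L * n₀)) ℝ)
    (U : (l τ ν : ℕ) → Matrix (Fin (2 ^ (L - l) * m₀)) (Fin (r l τ ν)) ℝ) (l τ ν : ℕ) : ℝ :=
  if h : l ≤ L ∧ τ < 2 ^ l ∧ ν < 2 ^ (L - l) then
    frobSq (blockOf A l τ ν h.1 h.2.1 h.2.2
      - U l τ ν * ((U l τ ν)ᵀ * blockOf A l τ ν h.1 h.2.1 h.2.2))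
  else 0

noncomputable def resEntry (A : Matrix (Fin (2 ^ L * m₀)) (Fin (2 ^ L * n₀)) ℝ)
    (U : (l τ ν : ℕ) → Matrix (Fin (2 ^ (L - l) * m₀)) (Fin (r l τ ν)) ℝ)
    (l τ ν : ℕ) (x y : ℕ) : ℝ :=
  if h : (l ≤ L ∧ τ < 2 ^ l ∧ ν < 2 ^ (L - l)) ∧ x < 2 ^ (L - l) * m₀ ∧ y < 2 ^ l * n₀ then
    (blockOf A l τ ν h.1.1 h.1.2.1 h.1.2.2
      - U l τ ν * ((U l τ ν)ᵀ * blockOf A l τ ν h.1.1 h.1.2.1 h.1.2.2))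
      ⟨x, h.2.1⟩ ⟨y, h.2.2⟩ ^ 2
  else 0

lemma frobSq_A_eq (A : Matrix (Fin (2 ^ L * m₀)) (Fin (2 ^ L * n₀)) ℝ) :
    frobSq A = ∑ x ∈ Finset.range (2 ^ L * m₀), ∑ y ∈ Finset.range (2 ^ L * n₀), aEntry A x y := by
  unfold frobSq
  simp only [Finset.sum_range]
  refine Finset.sum_congr rfl fun x _ => Finset.sum_congr rfl fun y _ => ?_
  rw [aEntry, dif_pos ⟨x.isLt, y.isLt⟩]

lemma blockSq_eq (A : Matrix (Fin (2 ^ L * m₀)) (Fin (2 ^ L * n₀)) ℝ) {l τ ν : ℕ}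
    (hl : l ≤ L) (hτ : τ < 2 ^ l) (hν : ν < 2 ^ (L - l)) :
    blockSq A l τ ν = ∑ i ∈ Finset.range (2 ^ (L - l) * m₀), ∑ j ∈ Finset.range (2 ^ l * n₀),
      aEntry A (τ * (2 ^ (L - l) * m₀) + i) (ν * (2 ^ l * n₀) + j) := by
  rw [blockSq, dif_pos ⟨hl, hτ, hν⟩]
  unfold frobSq
  simp only [Finset.sum_range]
  refine Finset.sum_congr rfl fun i _ => Finset.sum_congr rfl fun j _ => ?_
  rw [aEntry, dif_pos ⟨(rowIdx L m₀ l τ hl hτ i).isLt, (colIdx L n₀ l ν hl hν j).isLt⟩]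
  rfl

lemma residSq_eq (A : Matrix (Fin (2 ^ L * m₀)) (Fin (2 ^ L * n₀)) ℝ)
    (U : (l τ ν : ℕ) → Matrix (Fin (2 ^ (L - l) * m₀)) (Fin (r l τ ν)) ℝ) {l τ ν : ℕ}
    (hl : l ≤ L) (hτ : τ < 2 ^ l) (hν : ν < 2 ^ (L - l)) :
    residSq A U l τ ν = ∑ x ∈ Finset.range (2 ^ (L - l) * m₀), ∑ y ∈ Finset.range (2 ^ l * n₀),
      resEntry A U l τ ν x y := by
  rw [residSq, dif_pos ⟨hl, hτ, hν⟩]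
  unfold frobSq
  simp only [Finset.sum_range]
  refine Finset.sum_congr rfl fun x _ => Finset.sum_congr rfl fun y _ => ?_
  rw [resEntry, dif_pos ⟨⟨hl, hτ, hν⟩, x.isLt, y.isLt⟩]

lemma sum_blockSq (A : Matrix (Fin (2 ^ L * m₀)) (Fin (2 ^ L * n₀)) ℝ) {l : ℕ} (hl : l ≤ L) :
    ∑ τ ∈ Finset.range (2 ^ l), ∑ ν ∈ Finset.range (2 ^ (L - l)), blockSq A l τ ν
      = frobSq A := by
  have hrow : 2 ^ L * m₀ = 2 ^ l * (2 ^ (L - l) * m₀) := by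
    rw [← mul_assoc, ← pow_add]; congr 2; omega
  have hcol : 2 ^ L * n₀ = 2 ^ (L - l) * (2 ^ l * n₀) := by
    rw [← mul_assoc, ← pow_add]; congr 2; omega
  rw [frobSq_A_eq]
  conv_rhs => rw [hrow]
  rw [sum_range_mul']
  refine Finset.sum_congr rfl fun τ hτ => ?_
  rw [Finset.mem_range] at hτ
  have : ∀ i ∈ Finset.range (2 ^ (L - l) * m₀),
      ∑ y ∈ Finset.range (2 ^ L * n₀), aEntry A (τ * (2 ^ (L - l) * m₀) + i) y
        = ∑ ν ∈ Finset.range (2 ^ (L - l)), ∑ j ∈ Finset.range (2 ^ l * n₀),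
            aEntry A (τ * (2 ^ (L - l) * m₀) + i) (ν * (2 ^ l * n₀) + j) := by
    intro i _
    conv_lhs => rw [hcol]
    rw [sum_range_mul']
  rw [Finset.sum_congr rfl this, Finset.sum_comm]
  refine Finset.sum_congr rfl fun ν hν => ?_
  rw [Finset.mem_range] at hν
  rw [blockSq_eq A hl hτ hν]

end Aux

section Step

variable {L m₀ n₀ : ℕ} {r : ℕ → ℕ → ℕ → ℕ}

lemma residSq_halves
    (A : Matrix (Fin (2 ^ L * m₀)) (Fin (2 ^ L * n₀)) ℝ)
    (U : (l τ ν : ℕ) → Matrix (Fin (2 ^ (L - l) * m₀)) (Fin (r l τ ν)) ℝ)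
    {l τ' μ : ℕ} (hc1 : l + 1 ≤ L) (hτ' : τ' < 2 ^ (l + 1)) (hμ : μ < 2 ^ (L - (l + 1))) :
    residSq A U (l + 1) τ' μ
      = (∑ x ∈ Finset.range (2 ^ (L - (l + 1)) * m₀), ∑ y ∈ Finset.range (2 ^ l * n₀),
          resEntry A U (l + 1) τ' μ x y)
        + ∑ x ∈ Finset.range (2 ^ (L - (l + 1)) * m₀), ∑ y ∈ Finset.range (2 ^ l * n₀),
          resEntry A U (l + 1) τ' μ x (2 ^ l * n₀ + y) := by
  rw [residSq_eq A U hc1 hτ' hμ]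
  rw [show (2 : ℕ) ^ (l + 1) * n₀ = 2 ^ l * n₀ + 2 ^ l * n₀ by rw [pow_succ]; ring]
  rw [← Finset.sum_add_distrib]
  exact Finset.sum_congr rfl fun x _ => sum_range_add' _ _ _

lemma step_block
    (A : Matrix (Fin (2 ^ L * m₀)) (Fin (2 ^ L * n₀)) ℝ)
    (U : (l τ ν : ℕ) → Matrix (Fin (2 ^ (L - l) * m₀)) (Fin (r l τ ν)) ℝ)
    {l τ ν : ℕ} (hl' : l < L) (hτ : τ < 2 ^ l) (hν : ν < 2 ^ (L - l))
    {ε : ℝ} (hε : 0 ≤ ε)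
    (R' : Matrix (Fin (r (l + 1) (2 * τ) (ν / 2)) ⊕ Fin (r (l + 1) (2 * τ + 1) (ν / 2)))
      (Fin (r l τ ν)) ℝ)
    (hO1 : (U (l + 1) (2 * τ) (ν / 2))ᵀ * U (l + 1) (2 * τ) (ν / 2) = 1)
    (hO2 : (U (l + 1) (2 * τ + 1) (ν / 2))ᵀ * U (l + 1) (2 * τ + 1) (ν / 2) = 1)
    (hR : R'ᵀ * R' = 1)
    (D : Matrix (Fin (2 ^ (L - (l + 1)) * m₀) ⊕ Fin (2 ^ (L - (l + 1)) * m₀))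
      (Fin (r (l + 1) (2 * τ) (ν / 2)) ⊕ Fin (r (l + 1) (2 * τ + 1) (ν / 2))) ℝ)
    (hD : D = Matrix.fromBlocks (U (l + 1) (2 * τ) (ν / 2)) 0 0 (U (l + 1) (2 * τ + 1) (ν / 2)))
    (K' : Matrix (Fin (2 ^ (L - (l + 1)) * m₀) ⊕ Fin (2 ^ (L - (l + 1)) * m₀))
      (Fin (2 ^ l * n₀)) ℝ)
    (hK' : K' = (blockOf A l τ ν hl'.le hτ hν).submatrix (⇑(rowSplit L m₀ l hl').symm) id)
    (hb : frobNorm (Dᵀ * K' - R' * (R'ᵀ * (Dᵀ * K'))) ≤ ε * frobNorm (Dᵀ * K'))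
    (hU : U l τ ν = (D * R').submatrix (⇑(rowSplit L m₀ l hl')) id) :
    residSq A U l τ ν ≤
      (∑ x ∈ Finset.range (2 ^ (L - (l + 1)) * m₀), ∑ y ∈ Finset.range (2 ^ l * n₀),
        resEntry A U (l + 1) (2 * τ) (ν / 2) x (ν % 2 * (2 ^ l * n₀) + y))
      + (∑ x ∈ Finset.range (2 ^ (L - (l + 1)) * m₀), ∑ y ∈ Finset.range (2 ^ l * n₀),
        resEntry A U (l + 1) (2 * τ + 1) (ν / 2) x (ν % 2 * (2 ^ l * n₀) + y))
      + ε ^ 2 * blockSq A l τ ν := by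
  have h2l : (2 : ℕ) ^ (l + 1) = 2 * 2 ^ l := by rw [pow_succ]; ring
  have h2L : (2 : ℕ) ^ (L - l) = 2 * 2 ^ (L - (l + 1)) := by
    have h : L - l = (L - (l + 1)) + 1 := by omega
    rw [h, pow_succ]; ring
  have hc1 : l + 1 ≤ L := hl'
  have hc2 : 2 * τ < 2 ^ (l + 1) := by omega
  have hc2' : 2 * τ + 1 < 2 ^ (l + 1) := by omega
  have hc3 : ν / 2 < 2 ^ (L - (l + 1)) := by omega
  set e := rowSplit L m₀ l hl' with he
  set U₁ := U (l + 1) (2 * τ) (ν / 2) with hU₁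
  set U₂ := U (l + 1) (2 * τ + 1) (ν / 2) with hU₂
  set K := blockOf A l τ ν hl'.le hτ hν with hKdef
  have hDD : Dᵀ * D = 1 := by rw [hD]; exact fromBlocks_orth _ _ hO1 hO2
  have hKsub : K = K'.submatrix ⇑e id := by
    rw [hK']; ext i j; simp
  have hUtK : (U l τ ν)ᵀ * K = (D * R')ᵀ * K' := by
    rw [hU, hKsub]; exact submatrix_transpose_mul_submatrix _ _ e
  have hmain : K - U l τ ν * ((U l τ ν)ᵀ * K)
      = (K' - (D * R') * ((D * R')ᵀ * K')).submatrix ⇑e id := by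
    rw [hUtK, hU, submatrix_row_mul, hKsub]
    ext i j; simp
  have h1 : residSq A U l τ ν = frobSq (K' - (D * R') * ((D * R')ᵀ * K')) := by
    have hgoal : frobSq (K - U l τ ν * ((U l τ ν)ᵀ * K))
        = frobSq (K' - (D * R') * ((D * R')ᵀ * K')) := by
      rw [hmain, frobSq_submatrix]
    rw [residSq, dif_pos ⟨hl'.le, hτ, hν⟩]
    exact hgoal
  have hV : (D * R') * ((D * R')ᵀ * K') = D * (R' * (R'ᵀ * (Dᵀ * K'))) := by
    simp only [Matrix.transpose_mul, Matrix.mul_assoc]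
  have hdecomp : frobSq (K' - (D * R') * ((D * R')ᵀ * K'))
      = frobSq (K' - D * (Dᵀ * K')) + frobSq (Dᵀ * K' - R' * (R'ᵀ * (Dᵀ * K'))) := by
    rw [hV]; exact frobSq_proj_decomp D hDD K' _
  have hsecond : frobSq (Dᵀ * K' - R' * (R'ᵀ * (Dᵀ * K'))) ≤ ε ^ 2 * blockSq A l τ ν := by
    have h2 := pow_le_pow_left₀ (frobNorm_nonneg _) hb 2
    rw [mul_pow, frobNorm_sq, frobNorm_sq] at h2
    have h3 : frobSq (Dᵀ * K') ≤ frobSq K' := frobSq_transpose_mul_le D hDD K'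
    have h4 : frobSq K' = blockSq A l τ ν := by
      rw [hK', blockSq, dif_pos ⟨hl'.le, hτ, hν⟩]
      exact frobSq_submatrix _ (rowSplit L m₀ l hl').symm
    nlinarith [sq_nonneg ε]
  -- column embedding into the parent block at level l+1
  have hcembb : ∀ y : Fin (2 ^ l * n₀), ν % 2 * (2 ^ l * n₀) + y.1 < 2 ^ (l + 1) * n₀ := by
    intro y
    have hm2 : ν % 2 ≤ 1 := by omega
    calc ν % 2 * (2 ^ l * n₀) + y.1 < ν % 2 * (2 ^ l * n₀) + 2 ^ l * n₀ :=
          Nat.add_lt_add_left y.2 _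
      _ ≤ 1 * (2 ^ l * n₀) + 2 ^ l * n₀ :=
          Nat.add_le_add_right (Nat.mul_le_mul_right _ hm2) _
      _ = 2 ^ (l + 1) * n₀ := by rw [h2l]; ring
  set cemb : Fin (2 ^ l * n₀) → Fin (2 ^ (l + 1) * n₀) :=
    fun y => ⟨ν % 2 * (2 ^ l * n₀) + y.1, hcembb y⟩ with hcemb
  set Kc₁ := blockOf A (l + 1) (2 * τ) (ν / 2) hc1 hc2 hc3 with hKc₁
  set Kc₂ := blockOf A (l + 1) (2 * τ + 1) (ν / 2) hc1 hc2' hc3 with hKc₂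
  have hKrows : K' = Matrix.fromRows (Kc₁.submatrix id cemb) (Kc₂.submatrix id cemb) := by
    rw [hK']
    ext i j
    cases i with
    | inl i =>
        show A (rowIdx L m₀ l τ hl'.le hτ (e.symm (Sum.inl i))) (colIdx L n₀ l ν hl'.le hν j)
          = A (rowIdx L m₀ (l + 1) (2 * τ) hc1 hc2 i) (colIdx L n₀ (l + 1) (ν / 2) hc1 hc3 (cemb j))
        congr 1
        · apply Fin.ext
          show τ * (2 ^ (L - l) * m₀) + (e.symm (Sum.inl i)).1
            = 2 * τ * (2 ^ (L - (l + 1)) * m₀) + i.1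
          rw [he, rowSplit_symm_inl, h2L]; ring
        · apply Fin.ext
          show ν * (2 ^ l * n₀) + j.1
            = ν / 2 * (2 ^ (l + 1) * n₀) + (ν % 2 * (2 ^ l * n₀) + j.1)
          have hdm : ν = 2 * (ν / 2) + ν % 2 := (Nat.div_add_mod ν 2).symm
          rw [h2l]
          conv_lhs => rw [hdm]
          ring
    | inr i =>
        show A (rowIdx L m₀ l τ hl'.le hτ (e.symm (Sum.inr i))) (colIdx L n₀ l ν hl'.le hν j)
          = A (rowIdx L m₀ (l + 1) (2 * τ + 1) hc1 hc2' i)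
              (colIdx L n₀ (l + 1) (ν / 2) hc1 hc3 (cemb j))
        congr 1
        · apply Fin.ext
          show τ * (2 ^ (L - l) * m₀) + (e.symm (Sum.inr i)).1
            = (2 * τ + 1) * (2 ^ (L - (l + 1)) * m₀) + i.1
          rw [he, rowSplit_symm_inr, h2L]; ring
        · apply Fin.ext
          show ν * (2 ^ l * n₀) + j.1
            = ν / 2 * (2 ^ (l + 1) * n₀) + (ν % 2 * (2 ^ l * n₀) + j.1)
          have hdm : ν = 2 * (ν / 2) + ν % 2 := (Nat.div_add_mod ν 2).symm
          rw [h2l]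
          conv_lhs => rw [hdm]
          ring
  have hDK : Dᵀ * K' = Matrix.fromRows (U₁ᵀ * Kc₁.submatrix id cemb)
      (U₂ᵀ * Kc₂.submatrix id cemb) := by
    rw [hKrows, hD, Matrix.fromBlocks_transpose, Matrix.fromBlocks_mul_fromRows]
    simp
  have hfirst : frobSq (K' - D * (Dᵀ * K'))
      = frobSq (Kc₁.submatrix id cemb - U₁ * (U₁ᵀ * Kc₁.submatrix id cemb))
        + frobSq (Kc₂.submatrix id cemb - U₂ * (U₂ᵀ * Kc₂.submatrix id cemb)) := by
    rw [hDK, hD, Matrix.fromBlocks_mul_fromRows]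
    simp only [Matrix.zero_mul, Matrix.mul_zero, add_zero, zero_add]
    rw [hKrows, fromRows_sub, frobSq_fromRows]
  have hchild : ∀ (τ' : ℕ) (hτ' : τ' < 2 ^ (l + 1))
      (Kc : Matrix (Fin (2 ^ (L - (l + 1)) * m₀)) (Fin (2 ^ (l + 1) * n₀)) ℝ)
      (hKc : Kc = blockOf A (l + 1) τ' (ν / 2) hc1 hτ' hc3),
      frobSq (Kc.submatrix id cemb - U (l + 1) τ' (ν / 2) *
          ((U (l + 1) τ' (ν / 2))ᵀ * Kc.submatrix id cemb))
        = ∑ x ∈ Finset.range (2 ^ (L - (l + 1)) * m₀), ∑ y ∈ Finset.range (2 ^ l * n₀),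
            resEntry A U (l + 1) τ' (ν / 2) x (ν % 2 * (2 ^ l * n₀) + y) := by
    intro τ' hτ' Kc hKc
    have hres : Kc.submatrix id cemb - U (l + 1) τ' (ν / 2) *
        ((U (l + 1) τ' (ν / 2))ᵀ * Kc.submatrix id cemb)
        = (Kc - U (l + 1) τ' (ν / 2) * ((U (l + 1) τ' (ν / 2))ᵀ * Kc)).submatrix id cemb := by
      rw [mul_submatrix_col, mul_submatrix_col]
      ext i j; simp
    rw [hres]
    unfold frobSq
    simp only [Finset.sum_range]
    refine Finset.sum_congr rfl fun x _ => Finset.sum_congr rfl fun y _ => ?_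
    rw [resEntry, dif_pos ⟨⟨hc1, hτ', hc3⟩, x.isLt, hcembb y⟩]
    rw [hKc]
    rfl
  have hch1 := hchild (2 * τ) hc2 Kc₁ hKc₁
  have hch2 := hchild (2 * τ + 1) hc2' Kc₂ hKc₂
  rw [h1, hdecomp, hfirst, hch1, hch2]
  linarith
end Step

/-- **Theorem 5.1 (column-wise butterfly error bound).** -/
theorem columnwise_butterfly_error_bound {L lm m₀ n₀ : ℕ}
    (hL : 1 ≤ L) (hlm : lm ≤ L) (hm : 1 ≤ m₀) (hn : 1 ≤ n₀)
    (ε : ℝ) (hε : 0 ≤ ε)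
    (A : Matrix (Fin (2 ^ L * m₀)) (Fin (2 ^ L * n₀)) ℝ)
    (r : ℕ → ℕ → ℕ → ℕ)
    (U : (l : ℕ) → (τ : ℕ) → (ν : ℕ) → Matrix (Fin (2 ^ (L - l) * m₀)) (Fin (r l τ ν)) ℝ)
    (R : (l : ℕ) → (τ : ℕ) → (ν : ℕ) →
      Matrix (Fin (r (l + 1) (2 * τ) (ν / 2)) ⊕ Fin (r (l + 1) (2 * τ + 1) (ν / 2)))
        (Fin (r l τ ν)) ℝ)
    -- (a) leaf-level bases are orthonormal and compress the leaf blocks with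
    -- relative accuracy ε
    (hleaf : ∀ τ (hτ : τ < 2 ^ L),
      (U L τ 0)ᵀ * U L τ 0 = 1 ∧
      frobNorm (blockOf A L τ 0 le_rfl hτ (Nat.two_pow_pos _) -
          U L τ 0 * ((U L τ 0)ᵀ * blockOf A L τ 0 le_rfl hτ (Nat.two_pow_pos _))) ≤
        ε * frobNorm (blockOf A L τ 0 le_rfl hτ (Nat.two_pow_pos _)))
    -- (b) the transfer matrices are orthonormal, compress the intermediate
    -- matrices with relative accuracy ε, and define the nested bases U = D·R
    (hrec : ∀ l τ ν (hl : lm ≤ l) (hl' : l < L) (hτ : τ < 2 ^ l) (hν : ν < 2 ^ (L - l)),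
      let D := Matrix.fromBlocks
        (U (l + 1) (2 * τ) (ν / 2)) 0 0 (U (l + 1) (2 * τ + 1) (ν / 2));
      let K' := (blockOf A l τ ν hl'.le hτ hν).submatrix (⇑(rowSplit L m₀ l hl').symm) id;
      (R l τ ν)ᵀ * R l τ ν = 1 ∧
      frobNorm (Dᵀ * K' - R l τ ν * ((R l τ ν)ᵀ * (Dᵀ * K'))) ≤ ε * frobNorm (Dᵀ * K') ∧
      U l τ ν = (D * R l τ ν).submatrix (⇑(rowSplit L m₀ l hl')) id) :
    ∀ l (hl : lm ≤ l) (hl' : l ≤ L),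
      ∑ τ : Fin (2 ^ l), ∑ ν : Fin (2 ^ (L - l)),
        frobNorm (blockOf A l τ.1 ν.1 hl' τ.2 ν.2 -
          U l τ.1 ν.1 * ((U l τ.1 ν.1)ᵀ * blockOf A l τ.1 ν.1 hl' τ.2 ν.2)) ^ 2 ≤
      ((L - l + 1 : ℕ) : ℝ) * ε ^ 2 * frobNorm A ^ 2 := by
  -- orthonormality of all bases, by downward induction
  have orth : ∀ d l τ ν, l + d = L → lm ≤ l → τ < 2 ^ l → ν < 2 ^ (L - l) →
      (U l τ ν)ᵀ * U l τ ν = 1 := by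
    intro d
    induction d with
    | zero =>
        intro l τ ν hdl hlml hτ hν
        have hlL : l = L := by omega
        have hν0 : ν = 0 := by
          have h1 : (2 : ℕ) ^ (L - l) = 1 := by rw [hlL]; simp
          omega
        subst hlL
        subst hν0
        exact (hleaf τ hτ).1
    | succ d ih =>
        intro l τ ν hdl hlml hτ hν
        have hl' : l < L := by omega
        obtain ⟨hRo, hb, hUd⟩ := hrec l τ ν hlml hl' hτ hν
        have h2l : (2 : ℕ) ^ (l + 1) = 2 * 2 ^ l := by rw [pow_succ]; ring
        have h2L : (2 : ℕ) ^ (L - l) = 2 * 2 ^ (L - (l + 1)) := by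
          have h : L - l = L - (l + 1) + 1 := by omega
          rw [h, pow_succ]; ring
        have hO1 := ih (l + 1) (2 * τ) (ν / 2) (by omega) (by omega) (by omega) (by omega)
        have hO2 := ih (l + 1) (2 * τ + 1) (ν / 2) (by omega) (by omega) (by omega) (by omega)
        rw [hUd, submatrix_transpose_mul_submatrix]
        have hassoc : (Matrix.fromBlocks (U (l + 1) (2 * τ) (ν / 2)) 0 0
              (U (l + 1) (2 * τ + 1) (ν / 2)) * R l τ ν)ᵀ *
            (Matrix.fromBlocks (U (l + 1) (2 * τ) (ν / 2)) 0 0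
              (U (l + 1) (2 * τ + 1) (ν / 2)) * R l τ ν)
            = (R l τ ν)ᵀ * (((Matrix.fromBlocks (U (l + 1) (2 * τ) (ν / 2)) 0 0
              (U (l + 1) (2 * τ + 1) (ν / 2)))ᵀ * Matrix.fromBlocks (U (l + 1) (2 * τ) (ν / 2)) 0 0
              (U (l + 1) (2 * τ + 1) (ν / 2))) * R l τ ν) := by
          simp only [Matrix.transpose_mul, Matrix.mul_assoc]
        rw [hassoc, fromBlocks_orth _ _ hO1 hO2, Matrix.one_mul, hRo]
  -- the inductive step over one level
  have level_step : ∀ l, lm ≤ l → l < L →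
      ∑ τ ∈ Finset.range (2 ^ l), ∑ ν ∈ Finset.range (2 ^ (L - l)), residSq A U l τ ν
        ≤ (∑ τ' ∈ Finset.range (2 ^ (l + 1)), ∑ μ ∈ Finset.range (2 ^ (L - (l + 1))),
            residSq A U (l + 1) τ' μ) + ε ^ 2 * frobSq A := by
    intro l hlml hl'
    have h2l : (2 : ℕ) ^ (l + 1) = 2 * 2 ^ l := by rw [pow_succ]; ring
    have h2L : (2 : ℕ) ^ (L - l) = 2 * 2 ^ (L - (l + 1)) := by
      have h : L - l = L - (l + 1) + 1 := by omega
      rw [h, pow_succ]; ring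
    have hc1 : l + 1 ≤ L := hl'
    have hterm : ∀ τ ∈ Finset.range (2 ^ l), ∀ ν ∈ Finset.range (2 ^ (L - l)),
        residSq A U l τ ν ≤
          (∑ x ∈ Finset.range (2 ^ (L - (l + 1)) * m₀), ∑ y ∈ Finset.range (2 ^ l * n₀),
            resEntry A U (l + 1) (2 * τ) (ν / 2) x (ν % 2 * (2 ^ l * n₀) + y))
          + (∑ x ∈ Finset.range (2 ^ (L - (l + 1)) * m₀), ∑ y ∈ Finset.range (2 ^ l * n₀),
            resEntry A U (l + 1) (2 * τ + 1) (ν / 2) x (ν % 2 * (2 ^ l * n₀) + y))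
          + ε ^ 2 * blockSq A l τ ν := by
      intro τ hτ ν hν
      rw [Finset.mem_range] at hτ hν
      obtain ⟨hRo, hb, hUd⟩ := hrec l τ ν hlml hl' hτ hν
      exact step_block A U hl' hτ hν hε (R l τ ν)
        (orth (L - (l + 1)) (l + 1) (2 * τ) (ν / 2) (by omega) (by omega) (by omega) (by omega))
        (orth (L - (l + 1)) (l + 1) (2 * τ + 1) (ν / 2) (by omega) (by omega) (by omega)
          (by omega))
        hRo _ rfl _ rfl hb hUd
    have hν_sum : ∀ τ, τ < 2 ^ l →
        ∑ ν ∈ Finset.range (2 ^ (L - l)),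
          ((∑ x ∈ Finset.range (2 ^ (L - (l + 1)) * m₀), ∑ y ∈ Finset.range (2 ^ l * n₀),
            resEntry A U (l + 1) (2 * τ) (ν / 2) x (ν % 2 * (2 ^ l * n₀) + y))
          + (∑ x ∈ Finset.range (2 ^ (L - (l + 1)) * m₀), ∑ y ∈ Finset.range (2 ^ l * n₀),
            resEntry A U (l + 1) (2 * τ + 1) (ν / 2) x (ν % 2 * (2 ^ l * n₀) + y)))
          = ∑ μ ∈ Finset.range (2 ^ (L - (l + 1))),
              (residSq A U (l + 1) (2 * τ) μ + residSq A U (l + 1) (2 * τ + 1) μ) := by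
      intro τ hτ
      rw [h2L, sum_range_two_mul']
      refine Finset.sum_congr rfl fun μ hμ => ?_
      rw [Finset.mem_range] at hμ
      have e1 : 2 * μ / 2 = μ := by omega
      have e2 : 2 * μ % 2 = 0 := by omega
      have e3 : (2 * μ + 1) / 2 = μ := by omega
      have e4 : (2 * μ + 1) % 2 = 1 := by omega
      simp only [e1, e2, e3, e4, zero_mul, one_mul, zero_add]
      have hh1 := residSq_halves A U (τ' := 2 * τ) (μ := μ) hc1 (by omega) hμ
      have hh2 := residSq_halves A U (τ' := 2 * τ + 1) (μ := μ) hc1 (by omega) hμ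
      rw [hh1, hh2]
      ring
    calc ∑ τ ∈ Finset.range (2 ^ l), ∑ ν ∈ Finset.range (2 ^ (L - l)), residSq A U l τ ν
        ≤ ∑ τ ∈ Finset.range (2 ^ l), ∑ ν ∈ Finset.range (2 ^ (L - l)),
          ((∑ x ∈ Finset.range (2 ^ (L - (l + 1)) * m₀), ∑ y ∈ Finset.range (2 ^ l * n₀),
            resEntry A U (l + 1) (2 * τ) (ν / 2) x (ν % 2 * (2 ^ l * n₀) + y))
          + (∑ x ∈ Finset.range (2 ^ (L - (l + 1)) * m₀), ∑ y ∈ Finset.range (2 ^ l * n₀),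
            resEntry A U (l + 1) (2 * τ + 1) (ν / 2) x (ν % 2 * (2 ^ l * n₀) + y))
          + ε ^ 2 * blockSq A l τ ν) := by
          refine Finset.sum_le_sum fun τ hτ => Finset.sum_le_sum fun ν hν => hterm τ hτ ν hν
      _ = (∑ τ ∈ Finset.range (2 ^ l), ∑ ν ∈ Finset.range (2 ^ (L - l)),
          ((∑ x ∈ Finset.range (2 ^ (L - (l + 1)) * m₀), ∑ y ∈ Finset.range (2 ^ l * n₀),
            resEntry A U (l + 1) (2 * τ) (ν / 2) x (ν % 2 * (2 ^ l * n₀) + y))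
          + (∑ x ∈ Finset.range (2 ^ (L - (l + 1)) * m₀), ∑ y ∈ Finset.range (2 ^ l * n₀),
            resEntry A U (l + 1) (2 * τ + 1) (ν / 2) x (ν % 2 * (2 ^ l * n₀) + y))))
          + ε ^ 2 * (∑ τ ∈ Finset.range (2 ^ l), ∑ ν ∈ Finset.range (2 ^ (L - l)),
            blockSq A l τ ν) := by
          simp only [Finset.sum_add_distrib, Finset.mul_sum]
      _ = (∑ τ ∈ Finset.range (2 ^ l), ∑ μ ∈ Finset.range (2 ^ (L - (l + 1))),
            (residSq A U (l + 1) (2 * τ) μ + residSq A U (l + 1) (2 * τ + 1) μ))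
          + ε ^ 2 * frobSq A := by
          rw [sum_blockSq A hl'.le]
          congr 1
          refine Finset.sum_congr rfl fun τ hτ => ?_
          rw [Finset.mem_range] at hτ
          exact hν_sum τ hτ
      _ = (∑ τ' ∈ Finset.range (2 ^ (l + 1)), ∑ μ ∈ Finset.range (2 ^ (L - (l + 1))),
            residSq A U (l + 1) τ' μ) + ε ^ 2 * frobSq A := by
          congr 1
          rw [h2l, sum_range_two_mul']
          refine Finset.sum_congr rfl fun τ hτ => ?_
          rw [← Finset.sum_add_distrib]
  -- base case at the leaf level
  have base : ∑ τ ∈ Finset.range (2 ^ L), ∑ ν ∈ Finset.range (2 ^ (L - L)), residSq A U L τ ν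
      ≤ ε ^ 2 * frobSq A := by
    have h0 : (2 : ℕ) ^ (L - L) = 1 := by simp
    calc ∑ τ ∈ Finset.range (2 ^ L), ∑ ν ∈ Finset.range (2 ^ (L - L)), residSq A U L τ ν
        ≤ ∑ τ ∈ Finset.range (2 ^ L), ∑ ν ∈ Finset.range (2 ^ (L - L)),
            (ε ^ 2 * blockSq A L τ ν) := by
          refine Finset.sum_le_sum fun τ hτ => Finset.sum_le_sum fun ν hν => ?_
          rw [Finset.mem_range] at hτ hν
          have hν0 : ν = 0 := by omega
          subst hν0
          have hle := (hleaf τ hτ).2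
          have h2 := pow_le_pow_left₀ (frobNorm_nonneg _) hle 2
          rw [mul_pow, frobNorm_sq, frobNorm_sq] at h2
          rw [residSq, dif_pos ⟨le_rfl, hτ, Nat.two_pow_pos _⟩,
            blockSq, dif_pos ⟨le_rfl, hτ, Nat.two_pow_pos _⟩]
          exact h2
      _ = ε ^ 2 * frobSq A := by
          simp only [← Finset.mul_sum]
          rw [sum_blockSq A le_rfl]
  -- downward induction
  have aux : ∀ d l, l + d = L → lm ≤ l →
      ∑ τ ∈ Finset.range (2 ^ l), ∑ ν ∈ Finset.range (2 ^ (L - l)), residSq A U l τ ν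
        ≤ ((L - l + 1 : ℕ) : ℝ) * ε ^ 2 * frobSq A := by
    intro d
    induction d with
    | zero =>
        intro l hdl hlml
        have hlL : l = L := by omega
        have h1 : ((L - l + 1 : ℕ) : ℝ) = 1 := by rw [hlL]; simp
        rw [h1, one_mul]
        subst hlL
        exact base
    | succ d ih =>
        intro l hdl hlml
        have hl' : l < L := by omega
        have h1 := level_step l hlml hl'
        have h2 := ih (l + 1) (by omega) (by omega)
        have hc1 : ((L - (l + 1) + 1 : ℕ) : ℝ) = (d + 1 : ℕ) := by congr 1; omega
        have hc2 : ((L - l + 1 : ℕ) : ℝ) = (d + 2 : ℕ) := by congr 1; omega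
        rw [hc1] at h2
        rw [hc2]
        have hF := frobSq_nonneg A
        have hε2 : (0 : ℝ) ≤ ε ^ 2 := sq_nonneg ε
        push_cast at h2 ⊢
        nlinarith
  -- conclusion
  intro l hl hl'
  have hgoal : ∑ τ : Fin (2 ^ l), ∑ ν : Fin (2 ^ (L - l)),
      frobNorm (blockOf A l τ.1 ν.1 hl' τ.2 ν.2 -
        U l τ.1 ν.1 * ((U l τ.1 ν.1)ᵀ * blockOf A l τ.1 ν.1 hl' τ.2 ν.2)) ^ 2
      = ∑ τ ∈ Finset.range (2 ^ l), ∑ ν ∈ Finset.range (2 ^ (L - l)), residSq A U l τ ν := by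
    simp only [Finset.sum_range]
    refine Finset.sum_congr rfl fun τ _ => Finset.sum_congr rfl fun ν _ => ?_
    rw [residSq, dif_pos ⟨hl', τ.isLt, ν.isLt⟩, ← frobNorm_sq]
  rw [hgoal, frobNorm_sq]
  exact aux (L - l) l (by omega) hl
end

section
/- Let U be a real m×r matrix with orthonormal columns (Uᵀ U = 1), let V be a real n×s matrix with orthonormal columns (Vᵀ V = 1), and let K be a real m×n matrix. Then ‖K − U·Uᵀ·K·V·Vᵀ‖_F² ≤ ‖K − U·Uᵀ·K‖_F² + ‖K − K·V·Vᵀ‖_F². (This is the per-block inequality in the proof of Theorem 5.3: the error of the two-sided projection U·Uᵀ·K·V·Vᵀ is bounded by the sum of the squared errors of the one-sided column and row projections.) -/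
open Matrix

lemma frob_sq {α β : Type*} [Fintype α] [Fintype β] (A : Matrix α β ℝ) :
    frobNorm A ^ 2 = Matrix.trace (Aᵀ * A) := by
  rw [frobNorm, Real.sq_sqrt (by positivity)]
  simp only [Matrix.trace, Matrix.mul_apply, Matrix.transpose_apply, Matrix.diag_apply, sq]
  rw [Finset.sum_comm]

lemma trace_tmul_nonneg {α β : Type*} [Fintype α] [Fintype β] (A : Matrix α β ℝ) :
    0 ≤ Matrix.trace (Aᵀ * A) := by
  rw [← frob_sq]; positivity

theorem two_sided_projection_inequality {m n r s : ℕ}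
    (U : Matrix (Fin m) (Fin r) ℝ) (V : Matrix (Fin n) (Fin s) ℝ)
    (K : Matrix (Fin m) (Fin n) ℝ)
    (hU : Uᵀ * U = 1) (hV : Vᵀ * V = 1) :
    frobNorm (K - U * Uᵀ * K * V * Vᵀ) ^ 2 ≤
      frobNorm (K - U * Uᵀ * K) ^ 2 + frobNorm (K - K * V * Vᵀ) ^ 2 := by
  set P : Matrix (Fin m) (Fin m) ℝ := U * Uᵀ with hPdef
  set Q : Matrix (Fin n) (Fin n) ℝ := V * Vᵀ with hQdef
  have hPt : Pᵀ = P := by simp [hPdef, Matrix.transpose_mul]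
  have hPP : P * P = P := by
    rw [hPdef, Matrix.mul_assoc, ← Matrix.mul_assoc Uᵀ, hU, Matrix.one_mul]
  set A : Matrix (Fin m) (Fin n) ℝ := K - P * K with hA
  set C : Matrix (Fin m) (Fin n) ℝ := K - K * Q with hC
  set B : Matrix (Fin m) (Fin n) ℝ := P * C with hB
  have hsum : K - U * Uᵀ * K * V * Vᵀ = A + B := by
    simp only [hA, hB, hC, hPdef, hQdef, Matrix.mul_sub, Matrix.mul_assoc]
    abel
  have hCeq : K - K * V * Vᵀ = C := by rw [hC, hQdef, Matrix.mul_assoc]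
  have hPPC : P * (P * C) = P * C := by rw [← Matrix.mul_assoc, hPP]
  have horth : Aᵀ * B = 0 := by
    rw [hA, Matrix.transpose_sub, Matrix.transpose_mul, hPt, Matrix.sub_mul, hB,
      Matrix.mul_assoc Kᵀ P, hPPC, sub_self]
  have horth' : Bᵀ * A = 0 := by
    have := congrArg Matrix.transpose horth
    simpa [Matrix.transpose_mul] using this
  -- Pythagoras
  have hpyth : Matrix.trace ((A + B)ᵀ * (A + B)) =
      Matrix.trace (Aᵀ * A) + Matrix.trace (Bᵀ * B) := by
    rw [Matrix.transpose_add, Matrix.add_mul, Matrix.mul_add, Matrix.mul_add,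
      horth, horth']
    simp [Matrix.trace_add]
  -- contraction: trace(BᵀB) ≤ trace(CᵀC)
  have hcontr : Matrix.trace (Bᵀ * B) ≤ Matrix.trace (Cᵀ * C) := by
    have hD : ((1 - P) * C)ᵀ * ((1 - P) * C) = Cᵀ * C - Bᵀ * B := by
      have h1Pt : (1 - P)ᵀ = 1 - P := by simp [Matrix.transpose_sub, hPt]
      have h1P : (1 - P) * (1 - P) = 1 - P := by
        simp [Matrix.sub_mul, Matrix.mul_sub, hPP]
      rw [Matrix.transpose_mul, h1Pt, Matrix.mul_assoc, ← Matrix.mul_assoc (1 - P), h1P]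
      rw [hB, Matrix.transpose_mul, hPt, Matrix.mul_assoc, hPPC]
      rw [Matrix.sub_mul, Matrix.one_mul, Matrix.mul_sub]
    have := trace_tmul_nonneg ((1 - P) * C)
    rw [hD, Matrix.trace_sub] at this
    linarith
  rw [frob_sq, frob_sq, frob_sq, hsum, hCeq, hpyth, hA]
  linarith
end
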